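/- For any positive semidefinite Hermitian matrices A, B ∈ ℂ^{N×N}, log det(I + A + B) − log det(I + B) ≤ log det(I + A). -/

import Mathlib

open Matrix Real
open scoped ComplexOrder
open scoped MatrixOrder

namespace LogDetAux

variable {n : ℕ}

/-- For PSD `M`, `det (1 + M)` is a real number `≥ 1`. -/
lemma det_one_add_eq {M : Matrix (Fin n) (Fin n) ℂ} (hM : M.PosSemidef) :
    ∃ r : ℝ, 1 ≤ r ∧ (1 + M).det = (r : ℂ) := by
  have hH := hM.isHermitian
  have hev : (1:ℝ) ≤ ∏ i, (1 + hH.eigenvalues i) := by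
    calc (1:ℝ) = ∏ _i : Fin n, 1 := by simp
      _ ≤ ∏ i, (1 + hH.eigenvalues i) := by
        apply Finset.prod_le_prod
        · intros; norm_num
        · intro i _; linarith [hM.eigenvalues_nonneg i]
  refine ⟨∏ i, (1 + hH.eigenvalues i), hev, ?_⟩
  set U : Matrix (Fin n) (Fin n) ℂ := (hH.eigenvectorUnitary : Matrix (Fin n) (Fin n) ℂ)
  have hU : U * star U = 1 := Matrix.mem_unitaryGroup_iff.mp hH.eigenvectorUnitary.2
  have h1 : (1 : Matrix (Fin n) (Fin n) ℂ) + M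
      = U * (1 + diagonal (Complex.ofReal ∘ hH.eigenvalues)) * star U := by
    rw [Matrix.mul_add, Matrix.add_mul, Matrix.mul_one, hU]
    congr 1
    exact hH.spectral_theorem
  rw [h1, Matrix.det_mul_right_comm, hU, Matrix.one_mul]
  have h2 : (1 : Matrix (Fin n) (Fin n) ℂ) + diagonal (Complex.ofReal ∘ hH.eigenvalues)
      = diagonal (fun i => (1 : ℂ) + hH.eigenvalues i) := by
    rw [← Matrix.diagonal_one, Matrix.diagonal_add]
    rfl
  rw [h2, Matrix.det_diagonal]
  push_cast
  rfl

/-- Monotonicity step: adding a PSD matrix to a PosDef matrix multiplies det by `r ≥ 1`. -/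
lemma det_add_posSemidef {P C : Matrix (Fin n) (Fin n) ℂ} (hP : P.PosDef)
    (hC : C.PosSemidef) :
    ∃ r : ℝ, 1 ≤ r ∧ (P + C).det = P.det * (r : ℂ) := by
  set S := CFC.sqrt C with hSdef
  have hS : S.PosSemidef := (CFC.sqrt_nonneg C).posSemidef
  have hSS : S * S = C := CFC.sqrt_mul_sqrt_self C hC.nonneg
  have hPd : IsUnit P.det := hP.det_pos.ne'.isUnit
  have h1 : (P + C).det = P.det * (1 + S * P⁻¹ * S).det := by
    rw [← hSS]
    exact Matrix.det_add_mul S S hPd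
  have hmid : (S * P⁻¹ * S).PosSemidef := by
    have := hP.inv.posSemidef.conjTranspose_mul_mul_same S
    rwa [hS.isHermitian.eq] at this
  obtain ⟨r, hr, hdet⟩ := det_one_add_eq hmid
  exact ⟨r, hr, by rw [h1, hdet]⟩

end LogDetAux

open LogDetAux in
/-- For Hermitian positive semidefinite `A, B ∈ ℂ^{N×N}`:
`log det(I + A + B) − log det(I + B) ≤ log det(I + A)`. -/
theorem logdet_add_sub_le_left {N : ℕ} (A B : Matrix (Fin N) (Fin N) ℂ)
    (hA : A.PosSemidef) (hB : B.PosSemidef) :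
    Real.log ((1 + A + B).det.re) - Real.log ((1 + B).det.re) ≤
      Real.log ((1 + A).det.re) := by
  classical
  set M : Matrix (Fin N) (Fin N) ℂ := 1 + A with hMdef
  have hM : M.PosDef := Matrix.PosDef.one.add_posSemidef hA
  have hMdet : IsUnit M.det := hM.det_pos.ne'.isUnit
  set R := CFC.sqrt B with hRdef
  have hR : R.PosSemidef := (CFC.sqrt_nonneg B).posSemidef
  have hRR : R * R = B := CFC.sqrt_mul_sqrt_self B hB.nonneg
  -- Step 1: det(1+A+B) = det M * det X₀
  set X₀ : Matrix (Fin N) (Fin N) ℂ := 1 + R * M⁻¹ * R with hX₀def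
  have hRMR : (R * M⁻¹ * R).PosSemidef := by
    have := hM.inv.posSemidef.conjTranspose_mul_mul_same R
    rwa [hR.isHermitian.eq] at this
  have hX₀ : X₀.PosDef := Matrix.PosDef.one.add_posSemidef hRMR
  have step1 : (1 + A + B).det = M.det * X₀.det := by
    have h : (1 : Matrix (Fin N) (Fin N) ℂ) + A + B = M + R * R := by
      rw [hRR, hMdef]
    rw [h, Matrix.det_add_mul R R hMdet, hX₀def]
  -- 1 - M⁻¹ is PSD
  have hMinv : M⁻¹.PosDef := hM.inv
  set T := CFC.sqrt M⁻¹ with hTdef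
  have hT : T.PosSemidef := (CFC.sqrt_nonneg M⁻¹).posSemidef
  have hTT : T * T = M⁻¹ := CFC.sqrt_mul_sqrt_self M⁻¹ hMinv.posSemidef.nonneg
  have hTdet : IsUnit T.det := by
    have h2 : T.det * T.det = M⁻¹.det := by rw [← Matrix.det_mul, hTT]
    have : M⁻¹.det ≠ 0 := hMinv.det_pos.ne'
    rw [← h2] at this
    exact (mul_ne_zero_iff.mp this).1.isUnit
  have hTMT : T * M * T = 1 := by
    have hMi : M = (T * T)⁻¹ := by rw [hTT, Matrix.nonsing_inv_nonsing_inv M hMdet]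
    rw [hMi, Matrix.mul_inv_rev]
    have h3 : T * (T⁻¹ * T⁻¹) * T = (T * T⁻¹) * (T⁻¹ * T) := by
      simp only [Matrix.mul_assoc]
    rw [h3, Matrix.mul_nonsing_inv T hTdet, Matrix.nonsing_inv_mul T hTdet, Matrix.one_mul]
  have hone_sub : ((1 : Matrix (Fin N) (Fin N) ℂ) - M⁻¹).PosSemidef := by
    have hTAT : (T * A * T).PosSemidef := by
      have := hA.conjTranspose_mul_mul_same T
      rwa [hT.isHermitian.eq] at this
    have : T * A * T = 1 - M⁻¹ := by
      have hAeq : A = M - 1 := by rw [hMdef, add_sub_cancel_left]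
      rw [hAeq, Matrix.mul_sub, Matrix.mul_one, Matrix.sub_mul, hTMT, hTT]
    rwa [this] at hTAT
  -- Step 2: 1 + B = X₀ + R*(1-M⁻¹)*R
  have hC : (R * (1 - M⁻¹) * R).PosSemidef := by
    have := hone_sub.conjTranspose_mul_mul_same R
    rwa [hR.isHermitian.eq] at this
  have h1B : (1 : Matrix (Fin N) (Fin N) ℂ) + B = X₀ + R * (1 - M⁻¹) * R := by
    rw [hX₀def, ← hRR]
    rw [Matrix.mul_sub, Matrix.mul_one, Matrix.sub_mul]
    abel
  obtain ⟨r, hr, hdet2⟩ := det_add_posSemidef hX₀ hC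
  -- extract real values
  have hMre : 0 < M.det.re ∧ M.det.im = 0 := by
    have := hM.det_pos
    rw [Complex.lt_def] at this
    simpa using ⟨this.1, this.2.symm⟩
  have hXre : 0 < X₀.det.re ∧ X₀.det.im = 0 := by
    have := hX₀.det_pos
    rw [Complex.lt_def] at this
    simpa using ⟨this.1, this.2.symm⟩
  have hABre : (1 + A + B).det.re = M.det.re * X₀.det.re := by
    rw [step1, Complex.mul_re, hMre.2, hXre.2]; ring
  have hBre : (1 + B).det.re = X₀.det.re * r := by
    rw [h1B, hdet2, Complex.mul_re]
    simp [hXre.2]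
  have hAre : (1 + A).det.re = M.det.re := rfl
  rw [hABre, hBre, hAre]
  have hrpos : (0:ℝ) < r := lt_of_lt_of_le one_pos hr
  rw [Real.log_mul hMre.1.ne' hXre.1.ne', Real.log_mul hXre.1.ne' hrpos.ne']
  have : 0 ≤ Real.log r := Real.log_nonneg hr
  linarith
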